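/- Let d ≥ 2 be an integer and c ∈ (0,1]. Define G(q) = ∑_{k ≥ 1} c (dq)^k ∏_{i=1}^{k-1} (1 − c q^i) for q ∈ [0, 1/d). Then G is continuous and strictly increasing on [0, 1/d), G(0) = 0, and G(q) → ∞ as q → 1/d; consequently there is a unique q* ∈ (0, 1/d) with G(q*) = 1. -/

import Mathlib

open Finset Filter Set

noncomputable def Tm (c d q : ℝ) (k : ℕ) : ℝ :=
  c * (d * q) ^ (k + 1) * ∏ i ∈ Finset.Icc 1 k, (1 - c * q ^ i)

lemma factor_nonneg {c q : ℝ} (hc0 : 0 ≤ c) (hc1 : c ≤ 1) (h0 : 0 ≤ q) (h1 : q ≤ 1) (i : ℕ) :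
    0 ≤ 1 - c * q ^ i := by
  have h2 : q ^ i ≤ 1 := pow_le_one₀ h0 h1
  nlinarith [pow_nonneg h0 i]

lemma prod_le_one' {c q : ℝ} (hc0 : 0 ≤ c) (hc1 : c ≤ 1) (h0 : 0 ≤ q) (h1 : q ≤ 1) (k : ℕ) :
    ∏ i ∈ Finset.Icc 1 k, (1 - c * q ^ i) ≤ 1 :=
  Finset.prod_le_one (fun i _ => factor_nonneg hc0 hc1 h0 h1 i)
    (fun i _ => by nlinarith [pow_nonneg h0 i, mul_nonneg hc0 (pow_nonneg h0 i)])

lemma Tm_nonneg {c d q : ℝ} (hc0 : 0 ≤ c) (hc1 : c ≤ 1) (hd : 0 ≤ d) (h0 : 0 ≤ q) (h1 : q ≤ 1)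
    (k : ℕ) : 0 ≤ Tm c d q k := by
  refine mul_nonneg (mul_nonneg hc0 (pow_nonneg (mul_nonneg hd h0) _)) ?_
  exact Finset.prod_nonneg fun i _ => factor_nonneg hc0 hc1 h0 h1 i

lemma Tm_le {c d q : ℝ} (hc0 : 0 ≤ c) (hc1 : c ≤ 1) (hd : 0 ≤ d) (h0 : 0 ≤ q) (h1 : q ≤ 1)
    (k : ℕ) : Tm c d q k ≤ (d * q) ^ (k + 1) := by
  have hp := pow_nonneg (mul_nonneg hd h0) (k + 1)
  calc Tm c d q k ≤ c * (d*q)^(k+1) * 1 :=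
        mul_le_mul_of_nonneg_left (prod_le_one' hc0 hc1 h0 h1 k) (mul_nonneg hc0 hp)
    _ = c * (d*q)^(k+1) := by ring
    _ ≤ 1 * (d*q)^(k+1) := mul_le_mul_of_nonneg_right hc1 hp
    _ = (d*q)^(k+1) := one_mul _

lemma summable_Tm {c d q : ℝ} (hc0 : 0 ≤ c) (hc1 : c ≤ 1) (hd : 0 ≤ d) (h0 : 0 ≤ q) (h1 : q ≤ 1)
    (hdq : d * q < 1) : Summable (Tm c d q) := by
  have hg : Summable (fun k : ℕ => (d*q)^(k+1)) := by
    have := (summable_geometric_of_lt_one (mul_nonneg hd h0) hdq).mul_right (d*q)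
    refine this.congr fun k => ?_
    rw [pow_succ]
  exact Summable.of_nonneg_of_le (Tm_nonneg hc0 hc1 hd h0 h1) (Tm_le hc0 hc1 hd h0 h1) hg

lemma pow_sub_pow_le' {a b : ℝ} (ha : 0 ≤ a) (hab : a ≤ b) :
    ∀ n : ℕ, b ^ (n+1) - a ^ (n+1) ≤ (n+1) * b ^ n * (b - a) := by
  intro n
  induction n with
  | zero => simp
  | succ n ih =>
    have hb : 0 ≤ b := ha.trans hab
    have h1 : a ^ (n+1) ≤ b ^ (n+1) := pow_le_pow_left₀ ha hab _
    have h2 : b * (b ^ (n+1) - a ^ (n+1)) ≤ b * ((n+1) * b ^ n * (b - a)) :=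
      mul_le_mul_of_nonneg_left ih hb
    have h3 : a ^ (n+1) * (b - a) ≤ b ^ (n+1) * (b - a) :=
      mul_le_mul_of_nonneg_right h1 (by linarith)
    have key : b ^ (n+2) - a ^ (n+2) = b * (b ^ (n+1) - a ^ (n+1)) + a ^ (n+1) * (b - a) := by ring
    have h4 : b * ((n+1 : ℝ) * b ^ n * (b - a)) = (n+1 : ℝ) * b ^ (n+1) * (b - a) := by ring
    push_cast
    rw [key]
    push_cast at h2 h4 ih
    linarith [h2, h3, h4]

lemma f_mono {c q1 q2 : ℝ} (hc0 : 0 ≤ c) (hc1 : c ≤ 1) (h0 : 0 ≤ q1) (h12 : q1 ≤ q2)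
    (h2 : q2 ≤ 1/2) (i : ℕ) (hi : 1 ≤ i) :
    q1 * (1 - c * q1 ^ i) ≤ q2 * (1 - c * q2 ^ i) := by
  obtain ⟨j, rfl⟩ : ∃ j, i = j + 1 := ⟨i - 1, by omega⟩
  have hq2 : 0 ≤ q2 := h0.trans h12
  have hA : q2 ^ (j+2) - q1 ^ (j+2) ≤ (j+2 : ℝ) * q2 ^ (j+1) * (q2 - q1) := by
    have := pow_sub_pow_le' h0 h12 (j+1)
    push_cast at this ⊢
    convert this using 2 <;> ring
  have hB : (j+2 : ℝ) * q2 ^ (j+1) ≤ 1 := by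
    have hj : (j + 2 : ℝ) ≤ 2 ^ (j+1) := by
      have := Nat.lt_two_pow_self (n := j+1)
      have : (j + 2 : ℝ) ≤ (2:ℝ) ^ (j+1) := by exact_mod_cast this
      exact this
    have hq : q2 ^ (j+1) ≤ (1/2:ℝ) ^ (j+1) := pow_le_pow_left₀ hq2 h2 _
    have h2p : (0:ℝ) < 2 ^ (j+1) := by positivity
    calc (j+2 : ℝ) * q2 ^ (j+1) ≤ (2:ℝ)^(j+1) * (1/2)^(j+1) := by
          apply mul_le_mul hj hq (by positivity) (by positivity)
      _ = 1 := by rw [← mul_pow]; norm_num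
  have hpow : q1 ^ (j+2) ≤ q2 ^ (j+2) := pow_le_pow_left₀ h0 h12 _
  have hkey : c * (q2 ^ (j+2) - q1 ^ (j+2)) ≤ q2 - q1 := by
    calc c * (q2 ^ (j+2) - q1 ^ (j+2)) ≤ 1 * (q2 ^ (j+2) - q1 ^ (j+2)) :=
          mul_le_mul_of_nonneg_right hc1 (by linarith)
      _ ≤ (j+2 : ℝ) * q2 ^ (j+1) * (q2 - q1) := by linarith
      _ ≤ 1 * (q2 - q1) := mul_le_mul_of_nonneg_right hB (by linarith)
      _ = q2 - q1 := one_mul _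
  have e1 : q1 * (1 - c * q1 ^ (j+1)) = q1 - c * q1 ^ (j+2) := by ring
  have e2 : q2 * (1 - c * q2 ^ (j+1)) = q2 - c * q2 ^ (j+2) := by ring
  have e3 : c * (q2 ^ (j+2) - q1 ^ (j+2)) = c * q2 ^ (j+2) - c * q1 ^ (j+2) := by ring
  rw [e1, e2]
  linarith [hkey, e3]

lemma weier (s : Finset ℕ) (x : ℕ → ℝ) (h0 : ∀ i ∈ s, 0 ≤ x i) (h1 : ∀ i ∈ s, x i ≤ 1) :
    1 - ∑ i ∈ s, x i ≤ ∏ i ∈ s, (1 - x i) := by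
  induction s using Finset.cons_induction with
  | empty => simp
  | cons a t ha ih =>
    rw [Finset.sum_cons, Finset.prod_cons]
    have hxa0 := h0 a (Finset.mem_cons_self a t)
    have hxa1 := h1 a (Finset.mem_cons_self a t)
    have ht := ih (fun i hi => h0 i (Finset.mem_cons_of_mem hi))
      (fun i hi => h1 i (Finset.mem_cons_of_mem hi))
    have hsum : 0 ≤ ∑ i ∈ t, x i :=
      Finset.sum_nonneg fun i hi => h0 i (Finset.mem_cons_of_mem hi)
    nlinarith [mul_le_mul_of_nonneg_left ht (by linarith : (0:ℝ) ≤ 1 - x a)]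

lemma half_sum (k : ℕ) (hk : 1 ≤ k) :
    ∑ i ∈ Finset.Icc 2 k, (1/2 : ℝ) ^ i ≤ 1/2 - (1/2) ^ k := by
  induction k, hk using Nat.le_induction with
  | base => norm_num
  | succ n hn ih =>
    rw [Finset.sum_Icc_succ_top (by omega : 2 ≤ n + 1)]
    have hp : (0:ℝ) < (1/2) ^ n := by positivity
    have : ((1:ℝ)/2) ^ (n+1) = (1/2) * (1/2)^n := by ring
    rw [this]
    linarith

lemma prodLB {c q : ℝ} (hc0 : 0 ≤ c) (hc1 : c ≤ 1) (h0 : 0 ≤ q) (h2 : q ≤ 1/2) (k : ℕ) :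
    (1:ℝ)/4 ≤ ∏ i ∈ Finset.Icc 1 k, (1 - c * q ^ i) := by
  have h1 : q ≤ 1 := by linarith
  have step1 : ∏ i ∈ Finset.Icc 1 k, (1 - q ^ i) ≤ ∏ i ∈ Finset.Icc 1 k, (1 - c * q ^ i) := by
    apply Finset.prod_le_prod
    · intro i _
      have : q ^ i ≤ 1 := pow_le_one₀ h0 h1
      linarith
    · intro i _
      have : c * q ^ i ≤ q ^ i := by nlinarith [pow_nonneg h0 i]
      linarith
  rcases Nat.eq_zero_or_pos k with hk | hk
  · subst hk; simp; norm_num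
  · have hmem : 1 ∈ Finset.Icc 1 k := by simp [Finset.mem_Icc]; omega
    have hsplit : ∏ i ∈ Finset.Icc 1 k, (1 - q ^ i)
        = (1 - q ^ 1) * ∏ i ∈ (Finset.Icc 1 k).erase 1, (1 - q ^ i) :=
      (Finset.mul_prod_erase _ _ hmem).symm
    have herase : (Finset.Icc 1 k).erase 1 = Finset.Icc 2 k := by
      ext a; simp [Finset.mem_Icc, Finset.mem_erase]; omega
    have hsum2 : ∑ i ∈ Finset.Icc 2 k, q ^ i ≤ 1/2 := by
      have hle : ∑ i ∈ Finset.Icc 2 k, q ^ i ≤ ∑ i ∈ Finset.Icc 2 k, (1/2:ℝ) ^ i :=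
        Finset.sum_le_sum fun i _ => pow_le_pow_left₀ h0 h2 i
      have := half_sum k hk
      have hp : (0:ℝ) ≤ (1/2) ^ k := by positivity
      linarith
    have hw : (1:ℝ)/2 ≤ ∏ i ∈ Finset.Icc 2 k, (1 - q ^ i) := by
      have := weier (Finset.Icc 2 k) (fun i => q ^ i)
        (fun i _ => pow_nonneg h0 i) (fun i _ => pow_le_one₀ h0 h1)
      linarith
    have hq1 : (1:ℝ)/2 ≤ 1 - q ^ 1 := by rw [pow_one]; linarith
    calc (1:ℝ)/4 = (1/2) * (1/2) := by norm_num
      _ ≤ (1 - q ^ 1) * ∏ i ∈ Finset.Icc 2 k, (1 - q ^ i) := by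
          apply mul_le_mul hq1 hw (by norm_num) (by simp; linarith)
      _ = ∏ i ∈ Finset.Icc 1 k, (1 - q ^ i) := by rw [hsplit, herase]
      _ ≤ _ := step1

lemma Tm_eq (c d q : ℝ) (k : ℕ) :
    Tm c d q k = c * d ^ (k+1) * (q * ∏ i ∈ Finset.Icc 1 k, (q * (1 - c * q ^ i))) := by
  rw [Tm, Finset.prod_mul_distrib, Finset.prod_const, Nat.card_Icc]
  simp only [Nat.add_sub_cancel]
  rw [mul_pow]
  ring

lemma Tm_mono {c d q1 q2 : ℝ} (hc0 : 0 ≤ c) (hc1 : c ≤ 1) (hd : 0 ≤ d) (h0 : 0 ≤ q1)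
    (h12 : q1 ≤ q2) (h2 : q2 ≤ 1/2) (k : ℕ) : Tm c d q1 k ≤ Tm c d q2 k := by
  rw [Tm_eq, Tm_eq]
  have hq2 : 0 ≤ q2 := h0.trans h12
  have hP : ∏ i ∈ Finset.Icc 1 k, (q1 * (1 - c * q1 ^ i))
      ≤ ∏ i ∈ Finset.Icc 1 k, (q2 * (1 - c * q2 ^ i)) := by
    apply Finset.prod_le_prod
    · intro i _
      exact mul_nonneg h0 (factor_nonneg hc0 hc1 h0 (by linarith) i)
    · intro i hi
      exact f_mono hc0 hc1 h0 h12 h2 i (Finset.mem_Icc.mp hi).1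
  have hP0 : 0 ≤ ∏ i ∈ Finset.Icc 1 k, (q1 * (1 - c * q1 ^ i)) :=
    Finset.prod_nonneg fun i _ => mul_nonneg h0 (factor_nonneg hc0 hc1 h0 (by linarith) i)
  exact mul_le_mul_of_nonneg_left (mul_le_mul h12 hP hP0 hq2)
    (mul_nonneg hc0 (pow_nonneg hd _))

lemma Tm_continuous (c d : ℝ) (k : ℕ) : Continuous fun q => Tm c d q k := by
  unfold Tm
  exact (continuous_const.mul ((continuous_const.mul continuous_id).pow _)).mul
    (continuous_finset_prod _ fun i _ =>
      continuous_const.sub (continuous_const.mul (continuous_pow i)))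

theorem stmt_18 (d : ℕ) (hd : 2 ≤ d) (c : ℝ) (hc : 0 < c) (hc1 : c ≤ 1)
    (G : ℝ → ℝ)
    (hG : ∀ q, G q = ∑' k : ℕ, c * ((d : ℝ) * q) ^ (k + 1) * ∏ i ∈ Finset.Icc 1 k, (1 - c * q ^ i)) :
    ContinuousOn G (Set.Ico 0 (1 / (d : ℝ))) ∧
    StrictMonoOn G (Set.Ico 0 (1 / (d : ℝ))) ∧
    G 0 = 0 ∧
    Filter.Tendsto G (nhdsWithin (1 / (d : ℝ)) (Set.Iio (1 / (d : ℝ)))) Filter.atTop ∧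
    ∃! q : ℝ, q ∈ Set.Ioo 0 (1 / (d : ℝ)) ∧ G q = 1 := by
  have hd2 : (2:ℝ) ≤ (d:ℝ) := by exact_mod_cast hd
  have hd0 : (0:ℝ) < (d:ℝ) := by linarith
  set e : ℝ := 1 / (d:ℝ) with he
  have he0 : 0 < e := by rw [he]; positivity
  have he2 : e ≤ 1/2 := by
    rw [he]
    exact one_div_le_one_div_of_le (by norm_num) hd2
  have hde : (d:ℝ) * e = 1 := by rw [he]; field_simp
  have hq_lt : ∀ q : ℝ, q < e → (d:ℝ) * q < 1 := by
    intro q h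
    calc (d:ℝ) * q < (d:ℝ) * e := by exact mul_lt_mul_of_pos_left h hd0
      _ = 1 := hde
  have hsum : ∀ q : ℝ, 0 ≤ q → q < e → Summable (Tm c (d:ℝ) q) := fun q h0 h1 =>
    summable_Tm hc.le hc1 hd0.le h0 (by linarith) (hq_lt q h1)
  have hGt : ∀ q, G q = ∑' k, Tm c (d:ℝ) q k := hG
  -- continuity
  have hcont : ContinuousOn G (Set.Ico 0 e) := by
    intro q0 hq0
    obtain ⟨hq00, hq0e⟩ := hq0
    set r := (q0 + e)/2 with hr
    have hq0r : q0 < r := by rw [hr]; linarith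
    have hre : r < e := by rw [hr]; linarith
    have hr0 : 0 ≤ r := by rw [hr]; linarith
    have hdr : (d:ℝ) * r < 1 := hq_lt r hre
    have hb : ∀ (k:ℕ), ∀ x ∈ Set.Icc (0:ℝ) r, ‖Tm c (d:ℝ) x k‖ ≤ ((d:ℝ)*r)^(k+1) := by
      intro k x hx
      have hx1 : x ≤ 1 := le_trans hx.2 (by linarith)
      rw [Real.norm_eq_abs, abs_of_nonneg (Tm_nonneg hc.le hc1 hd0.le hx.1 hx1 k)]
      calc Tm c (d:ℝ) x k ≤ ((d:ℝ)*x)^(k+1) := Tm_le hc.le hc1 hd0.le hx.1 hx1 k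
        _ ≤ ((d:ℝ)*r)^(k+1) := by
            apply pow_le_pow_left₀ (mul_nonneg hd0.le hx.1)
            exact mul_le_mul_of_nonneg_left hx.2 hd0.le
    have hu : Summable fun k:ℕ => ((d:ℝ)*r)^(k+1) := by
      have := (summable_geometric_of_lt_one (mul_nonneg hd0.le hr0) hdr).mul_right ((d:ℝ)*r)
      exact this.congr fun k => (pow_succ _ _).symm
    have hTU := tendstoUniformlyOn_tsum hu (fun k x hx => hb k x hx)
    have hcs : ContinuousOn (fun x => ∑' k, Tm c (d:ℝ) x k) (Set.Icc 0 r) :=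
      hTU.continuousOn (Filter.Eventually.of_forall fun t =>
        (continuous_finset_sum t fun k _ => Tm_continuous c (d:ℝ) k).continuousOn).frequently
    have hcG : ContinuousOn G (Set.Icc 0 r) := hcs.congr (fun x _ => hGt x)
    have hmem : Set.Icc (0:ℝ) r ∈ nhdsWithin q0 (Set.Ico 0 e) := by
      apply Filter.mem_of_superset
        (Filter.inter_mem (mem_nhdsWithin_of_mem_nhds (Iio_mem_nhds hq0r)) self_mem_nhdsWithin)
      rintro x ⟨hx1, hx2, _⟩
      exact ⟨hx2, hx1.le⟩
    exact (hcG q0 ⟨hq00, hq0r.le⟩).mono_of_mem_nhdsWithin hmem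
  -- strict mono
  have hmono : StrictMonoOn G (Set.Ico 0 e) := by
    intro a ha b hb hab
    rw [hGt a, hGt b]
    have hb2 : b ≤ 1/2 := by linarith [hb.2]
    refine Summable.tsum_lt_tsum_of_nonneg (i := 0)
      (fun k => Tm_nonneg hc.le hc1 hd0.le ha.1 (by linarith [ha.2]) k)
      (fun k => Tm_mono hc.le hc1 hd0.le ha.1 hab.le hb2 k) ?_
      (hsum b (ha.1.trans hab.le) hb.2)
    simp only [Tm, Finset.Icc_eq_empty (by omega : ¬ (1:ℕ) ≤ 0), Finset.prod_empty,
      zero_add, pow_one, mul_one]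
    have : (d:ℝ) * a < (d:ℝ) * b := mul_lt_mul_of_pos_left hab hd0
    nlinarith
  -- G 0 = 0
  have hG0 : G 0 = 0 := by
    rw [hGt 0]
    have : ∀ k : ℕ, Tm c (d:ℝ) 0 k = 0 := by
      intro k
      simp [Tm, zero_pow]
    rw [tsum_congr this, tsum_zero]
  -- lower bound
  have hlow : ∀ q : ℝ, 0 ≤ q → q < e → (c/4) * ((d:ℝ)*q) * (1 - (d:ℝ)*q)⁻¹ ≤ G q := by
    intro q h0q hqe
    have h12 : q ≤ 1/2 := by linarith
    have hdq0 : 0 ≤ (d:ℝ)*q := mul_nonneg hd0.le h0q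
    have hdq1 : (d:ℝ)*q < 1 := hq_lt q hqe
    rw [hGt q]
    have hterm : ∀ k:ℕ, (c/4) * ((d:ℝ)*q)^(k+1) ≤ Tm c (d:ℝ) q k := by
      intro k
      have hP := prodLB hc.le hc1 h0q h12 k
      have h1 : c * ((d:ℝ)*q)^(k+1) * (1/4) ≤ c * ((d:ℝ)*q)^(k+1) * ∏ i ∈ Finset.Icc 1 k, (1 - c * q ^ i) :=
        mul_le_mul_of_nonneg_left hP (mul_nonneg hc.le (pow_nonneg hdq0 _))
      calc (c/4) * ((d:ℝ)*q)^(k+1) = c * ((d:ℝ)*q)^(k+1) * (1/4) := by ring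
        _ ≤ Tm c (d:ℝ) q k := h1
    have hsummL : Summable fun k:ℕ => (c/4) * ((d:ℝ)*q)^(k+1) := by
      have h2 := ((summable_geometric_of_lt_one hdq0 hdq1).mul_right ((d:ℝ)*q)).mul_left (c/4)
      exact h2.congr fun k => by rw [← pow_succ]
    have hle := Summable.tsum_le_tsum hterm hsummL (hsum q h0q hqe)
    have e1 : ∑' k:ℕ, (c/4) * ((d:ℝ)*q)^(k+1) = (c/4) * (((d:ℝ)*q) * (1 - (d:ℝ)*q)⁻¹) := by
      rw [tsum_mul_left]
      congr 1
      calc ∑' k:ℕ, ((d:ℝ)*q)^(k+1) = ∑' k:ℕ, ((d:ℝ)*q) * ((d:ℝ)*q)^k :=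
            tsum_congr fun k => pow_succ' _ _
        _ = ((d:ℝ)*q) * ∑' k:ℕ, ((d:ℝ)*q)^k := tsum_mul_left
        _ = ((d:ℝ)*q) * (1 - (d:ℝ)*q)⁻¹ := by rw [tsum_geometric_of_lt_one hdq0 hdq1]
    calc (c/4) * ((d:ℝ)*q) * (1 - (d:ℝ)*q)⁻¹ = (c/4) * (((d:ℝ)*q) * (1 - (d:ℝ)*q)⁻¹) := by ring
      _ = ∑' k:ℕ, (c/4) * ((d:ℝ)*q)^(k+1) := e1.symm
      _ ≤ ∑' k, Tm c (d:ℝ) q k := hle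
  -- tendsto
  have htend : Filter.Tendsto G (nhdsWithin e (Set.Iio e)) Filter.atTop := by
    have hA : Filter.Tendsto (fun q : ℝ => (c/4) * ((d:ℝ)*q)) (nhdsWithin e (Set.Iio e)) (nhds (c/4)) := by
      have h1 : Filter.Tendsto (fun q : ℝ => (c/4) * ((d:ℝ)*q)) (nhds e) (nhds ((c/4) * ((d:ℝ)*e))) :=
        (continuous_const.mul (continuous_const.mul continuous_id)).tendsto e
      rw [hde, mul_one] at h1
      exact h1.mono_left nhdsWithin_le_nhds
    have hB : Filter.Tendsto (fun q : ℝ => (1 - (d:ℝ)*q)⁻¹) (nhdsWithin e (Set.Iio e)) Filter.atTop := by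
      apply tendsto_inv_nhdsGT_zero.comp
      apply tendsto_nhdsWithin_of_tendsto_nhds_of_eventually_within
      · have h1 : Filter.Tendsto (fun q : ℝ => 1 - (d:ℝ)*q) (nhds e) (nhds (1 - (d:ℝ)*e)) :=
          (continuous_const.sub (continuous_const.mul continuous_id)).tendsto e
        rw [hde, sub_self] at h1
        exact h1.mono_left nhdsWithin_le_nhds
      · filter_upwards [self_mem_nhdsWithin] with q hq
        have := hq_lt q hq
        simp only [Set.mem_Ioi]
        linarith
    have hC := Filter.Tendsto.pos_mul_atTop (by positivity : (0:ℝ) < c/4) hA hB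
    apply Filter.tendsto_atTop_mono' _ ?_ hC
    filter_upwards [self_mem_nhdsWithin,
      eventually_nhdsWithin_of_eventually_nhds (eventually_gt_nhds he0)] with q hq1 hq2
    exact hlow q hq2.le hq1
  -- exists unique
  refine ⟨hcont, hmono, hG0, htend, ?_⟩
  obtain ⟨q1, hq1G, hq1pos, hq1lt⟩ :=
    ((htend.eventually (Filter.eventually_gt_atTop 1)).and
      ((eventually_nhdsWithin_of_eventually_nhds (eventually_gt_nhds he0)).and
        self_mem_nhdsWithin)).exists
  have hq1e : q1 < e := hq1lt
  have hsub : Set.Icc 0 q1 ⊆ Set.Ico 0 e := fun x hx => ⟨hx.1, lt_of_le_of_lt hx.2 hq1e⟩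
  have hmemI : (1:ℝ) ∈ Set.Icc (G 0) (G q1) := ⟨by rw [hG0]; norm_num, hq1G.le⟩
  obtain ⟨qs, hqsmem, hqseq⟩ := intermediate_value_Icc hq1pos.le (hcont.mono hsub) hmemI
  have hqs_pos : 0 < qs := by
    rcases lt_or_eq_of_le hqsmem.1 with h | h
    · exact h
    · exfalso
      rw [← h, hG0] at hqseq
      norm_num at hqseq
  refine ⟨qs, ⟨⟨hqs_pos, lt_of_le_of_lt hqsmem.2 hq1e⟩, hqseq⟩, ?_⟩
  intro y hy
  exact hmono.injOn ⟨hy.1.1.le, hy.1.2⟩ ⟨hqsmem.1, lt_of_le_of_lt hqsmem.2 hq1e⟩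
    (by rw [hy.2, hqseq])
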